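/- Let K be a compact Hausdorff space, w ∈ C(K), φ a homeomorphism of K onto itself, and T the weighted composition operator (Tf)(k) = w(k) f(φ(k)) on C(K). If T is semi-Fredholm (its range is closed and either its kernel or cokernel is finite-dimensional), then the zero set Z = {k ∈ K : w(k) = 0} is finite and consists of points isolated in K. -/

import Mathlib

open Filter Topology Set

/-- A complex-valued bump function: `1` at a point of an open set, `0` outside it. -/
lemma stmt0_bump {K : Type*} [TopologicalSpace K] [CompactSpace K] [T2Space K]
    {U : Set K} (hU : IsOpen U) {x : K} (hx : x ∈ U) :
    ∃ g : C(K, ℂ), g x = 1 ∧ ∀ y ∉ U, g y = 0 := by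
  obtain ⟨f, hf0, hf1, -⟩ := exists_continuous_zero_one_of_isClosed
    (isClosed_compl_iff.mpr hU) (isClosed_singleton (x := x))
    (by simpa [Set.disjoint_singleton_right] using hx)
  refine ⟨⟨fun k => (f k : ℂ), Complex.continuous_ofReal.comp f.continuous⟩, ?_, ?_⟩
  · simpa using congrArg (fun r : ℝ => (r : ℂ)) (hf1 rfl)
  · intro y hy
    simpa using congrArg (fun r : ℝ => (r : ℂ)) (hf0 hy)

/-- If the weighted composition operator `T f = w · (f ∘ φ)` on `C(K, ℂ)`
is semi-Fredholm, then the zero set of `w` is finite and consists of isolated points. -/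
theorem stmt0 {K : Type*} [TopologicalSpace K] [CompactSpace K] [T2Space K]
    (φ : K ≃ₜ K) (w : C(K, ℂ))
    (T : C(K, ℂ) →L[ℂ] C(K, ℂ))
    (hT : ∀ f : C(K, ℂ), ∀ k : K, T f k = w k * f (φ k))
    (hclosed : IsClosed (LinearMap.range (T : C(K, ℂ) →ₗ[ℂ] C(K, ℂ)) : Set C(K, ℂ)))
    (hfin : FiniteDimensional ℂ (LinearMap.ker (T : C(K, ℂ) →ₗ[ℂ] C(K, ℂ))) ∨
      FiniteDimensional ℂ (C(K, ℂ) ⧸ LinearMap.range (T : C(K, ℂ) →ₗ[ℂ] C(K, ℂ)))) :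
    {k : K | w k = 0}.Finite ∧ ∀ k : K, w k = 0 → IsOpen ({k} : Set K) := by
  classical
  -- `m k = √‖w k‖`
  set m : K → ℝ := fun k => Real.sqrt ‖w k‖ with hm
  have hmc : Continuous m := Real.continuous_sqrt.comp w.continuous.norm
  have hm0 : ∀ k, 0 ≤ m k := fun k => Real.sqrt_nonneg _
  have hmsq : ∀ k, ‖w k‖ = m k * m k := fun k => (Real.mul_self_sqrt (norm_nonneg _)).symm
  -- Step 1: closed range gives a uniform lower bound on `‖w‖` off the zero set.
  obtain ⟨c, hc0, hc⟩ : ∃ c > 0, ∀ k, w k ≠ 0 → c ≤ ‖w k‖ := by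
    set d : ℕ → K → ℝ := fun n k => max (m k) (1 / (n + 1)) with hd
    have hdpos : ∀ n k, 0 < d n k := fun n k => lt_max_of_lt_right (by positivity)
    have hdm : ∀ n k, m k ≤ d n k := fun n k => le_max_left _ _
    have hdc : ∀ n, Continuous fun k => (d n k)⁻¹ :=
      fun n => (hmc.max continuous_const).inv₀ fun k => (hdpos n k).ne'
    set F : ℕ → C(K, ℂ) := fun n =>
      ⟨fun k => ((d n (φ.symm k))⁻¹ : ℝ),
        Complex.continuous_ofReal.comp ((hdc n).comp φ.symm.continuous)⟩ with hF
    set g : ℕ → C(K, ℂ) := fun n => T (F n) with hg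
    have hgk : ∀ n k, g n k = w k * (((d n k)⁻¹ : ℝ) : ℂ) := by
      intro n k
      rw [hg, hT]
      simp [hF]
    have hgnorm : ∀ n k, ‖g n k‖ ≤ m k := by
      intro n k
      rw [hgk]
      rcases eq_or_ne (w k) 0 with h | h
      · simp [h, hm0]
      · have hmk : 0 < m k := Real.sqrt_pos.mpr (norm_pos_iff.mpr h)
        rw [norm_mul]
        have h2 : ‖(((d n k)⁻¹ : ℝ) : ℂ)‖ = (d n k)⁻¹ := by
          rw [Complex.norm_real, Real.norm_eq_abs, abs_of_pos (inv_pos.mpr (hdpos n k))]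
        rw [h2, hmsq k]
        calc m k * m k * (d n k)⁻¹ ≤ m k * m k * (m k)⁻¹ := by
              gcongr
              exact hdm n k
          _ = m k := by field_simp
    -- `g` is a Cauchy sequence
    have hcauchy : CauchySeq g := by
      apply cauchySeq_of_le_tendsto_0 (fun N : ℕ => 2 * (1 / (N + 1)))
      · intro n p N hn hp
        rw [ContinuousMap.dist_le (by positivity)]
        intro k
        rw [dist_eq_norm]
        rcases le_or_gt (1 / (N + 1) : ℝ) (m k) with h | h
        · have h1 : ∀ q : ℕ, N ≤ q → d q k = m k := by
            intro q hq
            refine max_eq_left (le_trans ?_ h)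
            apply one_div_le_one_div_of_le (by positivity)
            exact_mod_cast by exact_mod_cast add_le_add_left (Nat.cast_le.mpr hq) 1
          rw [hgk, hgk, h1 n hn, h1 p hp, sub_self, norm_zero]
          positivity
        · calc ‖g n k - g p k‖ ≤ ‖g n k‖ + ‖g p k‖ := norm_sub_le _ _
            _ ≤ m k + m k := add_le_add (hgnorm n k) (hgnorm p k)
            _ ≤ 2 * (1 / (N + 1)) := by linarith
      · simpa using tendsto_one_div_add_atTop_nhds_zero_nat.const_mul (2 : ℝ)
    obtain ⟨f₀, hf₀⟩ := cauchySeq_tendsto_of_complete hcauchy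
    have hf₀mem : f₀ ∈ LinearMap.range (T : C(K, ℂ) →ₗ[ℂ] C(K, ℂ)) :=
      hclosed.mem_of_tendsto hf₀ (Filter.Eventually.of_forall fun n => ⟨F n, rfl⟩)
    obtain ⟨f, hf⟩ := hf₀mem
    refine ⟨(1 / (‖f‖ + 1)) ^ 2, by positivity, ?_⟩
    intro k hk
    have hmk : 0 < m k := Real.sqrt_pos.mpr (norm_pos_iff.mpr hk)
    obtain ⟨N, hN⟩ := exists_nat_one_div_lt hmk
    have hev : ∀ n : ℕ, N ≤ n → g n k = w k * (((m k)⁻¹ : ℝ) : ℂ) := by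
      intro n hn
      rw [hgk]
      congr 3
      refine max_eq_left (le_of_lt (lt_of_le_of_lt ?_ hN))
      apply one_div_le_one_div_of_le (by positivity)
      exact_mod_cast add_le_add_left (Nat.cast_le.mpr hn) 1
    have hlim1 : Tendsto (fun n => g n k) atTop (𝓝 (w k * (((m k)⁻¹ : ℝ) : ℂ))) :=
      tendsto_const_nhds.congr' (eventually_atTop.mpr ⟨N, fun n hn => (hev n hn).symm⟩)
    have hlim2 : Tendsto (fun n => g n k) atTop (𝓝 (f₀ k)) :=
      ((continuous_eval_const k).tendsto f₀).comp hf₀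
    have hval : f₀ k = w k * (((m k)⁻¹ : ℝ) : ℂ) := tendsto_nhds_unique hlim2 hlim1
    have h1 : ‖f₀ k‖ = m k := by
      rw [hval, norm_mul, Complex.norm_real, Real.norm_eq_abs,
        abs_of_pos (inv_pos.mpr hmk), hmsq k]
      field_simp
    have h2 : ‖f₀ k‖ ≤ m k * m k * (‖f‖ + 1) := by
      rw [← hf, ContinuousLinearMap.coe_coe, hT f k, norm_mul]
      calc ‖w k‖ * ‖f (φ k)‖ ≤ ‖w k‖ * (‖f‖ + 1) := by
            gcongr
            · linarith [f.norm_coe_le_norm (φ k)]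
        _ = m k * m k * (‖f‖ + 1) := by rw [hmsq]
    have h3 : 1 ≤ m k * (‖f‖ + 1) := by
      have h2' : m k ≤ m k * m k * (‖f‖ + 1) := h1 ▸ h2
      nlinarith [hmk]
    have h4 : 1 / (‖f‖ + 1) ≤ m k := by
      rw [div_le_iff₀ (by positivity)]
      linarith
    rw [hmsq k, pow_two]
    exact mul_le_mul h4 h4 (by positivity) (hm0 k)
  -- Step 2: the zero set is open.
  have hZopen : IsOpen {k : K | w k = 0} := by
    have hEq : {k : K | w k = 0} = {k : K | ‖w k‖ < c} := by
      ext k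
      simp only [Set.mem_setOf_eq]
      constructor
      · intro h
        rw [h]
        simpa using hc0
      · intro h
        by_contra hne
        exact absurd (hc k hne) (not_le.mpr h)
    rw [hEq]
    exact isOpen_lt w.continuous.norm continuous_const
  -- Step 3: the zero set is finite.
  have hZfin : {k : K | w k = 0}.Finite := by
    by_contra hinf
    have hinf' : {k : K | w k = 0}.Infinite := hinf
    rcases hfin with hker | hcoker
    · -- kernel case
      haveI := hker
      obtain ⟨t, hts, htc⟩ := Set.Infinite.exists_subset_card_eq hinf'
        (Module.finrank ℂ (LinearMap.ker (T : C(K, ℂ) →ₗ[ℂ] C(K, ℂ))) + 1)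
      have hUopen : IsOpen (φ '' {k : K | w k = 0}) := φ.isOpen_image.mpr hZopen
      have hbump : ∀ x ∈ t, ∃ g : C(K, ℂ), g (φ x) = 1 ∧
          ∀ y ∉ (φ '' {k : K | w k = 0}) \ (φ '' (t.erase x : Set K)), g y = 0 := by
        intro x hx
        apply stmt0_bump
        · exact hUopen.sdiff (((t.erase x).finite_toSet.image φ).isClosed)
        · refine ⟨⟨x, hts hx, rfl⟩, ?_⟩
          rintro ⟨y, hy, hyx⟩
          have hyx' : y = x := φ.injective hyx
          subst hyx'
          exact Finset.notMem_erase y t (Finset.mem_coe.mp hy)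
      choose G hG1 hG0 using hbump
      have hker0 : ∀ x (hx : x ∈ t), G x hx ∈ LinearMap.ker (T : C(K, ℂ) →ₗ[ℂ] C(K, ℂ)) := by
        intro x hx
        rw [LinearMap.mem_ker]
        ext k
        rw [ContinuousMap.zero_apply, ContinuousLinearMap.coe_coe, hT]
        rcases eq_or_ne (w k) 0 with h | h
        · rw [h, zero_mul]
        · have hknot : φ k ∉ φ '' {k' : K | w k' = 0} := by
            rintro ⟨z, hz, hzk⟩
            have hzk' : z = k := φ.injective hzk
            subst hzk'
            exact h hz
          rw [hG0 x hx (φ k) (fun hmem => hknot hmem.1), mul_zero]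
      have hind : LinearIndependent ℂ (fun x : ↑t => G x.1 x.2) := by
        rw [linearIndependent_iff']
        intro s cf hsum i hi
        have h0 : (∑ j ∈ s, cf j • G j.1 j.2) (φ i.1) = 0 := by
          rw [hsum, ContinuousMap.zero_apply]
        simp only [ContinuousMap.coe_sum, Finset.sum_apply, ContinuousMap.coe_smul,
          Pi.smul_apply, smul_eq_mul] at h0
        rw [Finset.sum_eq_single i] at h0
        · rwa [hG1 i.1 i.2, mul_one] at h0
        · intro j hj hji
          rw [hG0 j.1 j.2 (φ i.1) ?_, mul_zero]
          intro hmem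
          refine hmem.2 ⟨i.1, ?_, rfl⟩
          simp only [Finset.coe_erase, Set.mem_diff, Finset.mem_coe, Set.mem_singleton_iff]
          exact ⟨i.2, fun h => hji (Subtype.ext h.symm)⟩
        · intro h
          exact absurd hi h
      have hindker : LinearIndependent ℂ
          (fun x : ↑t => (⟨G x.1 x.2, hker0 x.1 x.2⟩ : LinearMap.ker (T : C(K, ℂ) →ₗ[ℂ] C(K, ℂ)))) :=
        LinearIndependent.of_comp (LinearMap.ker (T : C(K, ℂ) →ₗ[ℂ] C(K, ℂ))).subtype hind
      have hcard := hindker.fintype_card_le_finrank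
      rw [Fintype.card_coe, htc] at hcard
      omega
    · -- cokernel case
      haveI := hcoker
      obtain ⟨t, hts, htc⟩ := Set.Infinite.exists_subset_card_eq hinf'
        (Module.finrank ℂ (C(K, ℂ) ⧸ LinearMap.range (T : C(K, ℂ) →ₗ[ℂ] C(K, ℂ))) + 1)
      have hbump : ∀ x ∈ t, ∃ g : C(K, ℂ), g x = 1 ∧
          ∀ y ∉ ((t.erase x : Set K))ᶜ, g y = 0 := by
        intro x hx
        apply stmt0_bump
        · exact ((t.erase x).finite_toSet.isClosed).isOpen_compl
        · simpa using Finset.notMem_erase x t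
      choose G hG1 hG0 using hbump
      have hind : LinearIndependent ℂ
          (fun x : ↑t => (LinearMap.range (T : C(K, ℂ) →ₗ[ℂ] C(K, ℂ))).mkQ (G x.1 x.2)) := by
        rw [linearIndependent_iff']
        intro s cf hsum i hi
        have h0 : (LinearMap.range (T : C(K, ℂ) →ₗ[ℂ] C(K, ℂ))).mkQ (∑ j ∈ s, cf j • G j.1 j.2) = 0 := by
          rw [map_sum]
          simpa only [map_smul] using hsum
        rw [Submodule.mkQ_apply, Submodule.Quotient.mk_eq_zero] at h0
        obtain ⟨f, hfeq⟩ := h0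
        have h1 : (∑ j ∈ s, cf j • G j.1 j.2) i.1 = 0 := by
          rw [← hfeq, ContinuousLinearMap.coe_coe, hT, hts i.2, zero_mul]
        simp only [ContinuousMap.coe_sum, Finset.sum_apply, ContinuousMap.coe_smul,
          Pi.smul_apply, smul_eq_mul] at h1
        rw [Finset.sum_eq_single i] at h1
        · rwa [hG1 i.1 i.2, mul_one] at h1
        · intro j hj hji
          rw [hG0 j.1 j.2 i.1 ?_, mul_zero]
          rw [Set.notMem_compl_iff, Finset.mem_coe, Finset.mem_erase]
          exact ⟨fun h => hji (Subtype.ext h.symm), i.2⟩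
        · intro h
          exact absurd hi h
      have hcard := hind.fintype_card_le_finrank
      rw [Fintype.card_coe, htc] at hcard
      omega
  -- Step 4: isolated points.
  refine ⟨hZfin, fun k hk => ?_⟩
  have h1 : IsClosed ({k' : K | w k' = 0} \ {k}) := (hZfin.subset Set.diff_subset).isClosed
  have h2 : ({k} : Set K) = {k' : K | w k' = 0} \ ({k' : K | w k' = 0} \ {k}) := by
    ext y
    simp only [Set.mem_singleton_iff, Set.mem_diff, Set.mem_setOf_eq, not_and, not_not]
    constructor
    · rintro rfl
      exact ⟨hk, fun _ => rfl⟩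
    · rintro ⟨hy, h⟩
      exact h hy
  rw [h2]
  exact hZopen.sdiff h1
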